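/- arXiv:2208.05883 — 2 statements merged into one kernel-verified Lean document; each statement's English description precedes it below -/
import Mathlib

section
/- If r and R are differentiable functions satisfying the coupled Riccati equations r' = ((n+r)/2)·R - (r² - λr)/R and R' = λ - 2r - R(t+R)/2 (with R nonvanishing), then r satisfies the second-order ODE 4[r'' + 3r² + 2(n-λ)r - nλ]² = t²[(r')² + 2r³ + 2(n-λ)r² - 2nλr]. -/
set_option maxHeartbeats 1000000 in
theorem coupled_riccati_to_second_order
    (n lam : ℝ) (r R : ℝ → ℝ)
    (hr : ∀ t, DifferentiableAt ℝ r t)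
    (hr' : ∀ t, DifferentiableAt ℝ (deriv r) t)
    (hR : ∀ t, DifferentiableAt ℝ R t)
    (hRne : ∀ t, R t ≠ 0)
    (eq1 : ∀ t, deriv r t = (n + r t) / 2 * R t - (r t ^ 2 - lam * r t) / R t)
    (eq2 : ∀ t, deriv R t = lam - 2 * r t - R t * (t + R t) / 2) :
    ∀ t, 4 * (deriv (deriv r) t + 3 * r t ^ 2 + 2 * (n - lam) * r t - n * lam) ^ 2
      = t ^ 2 * ((deriv r t) ^ 2 + 2 * r t ^ 3 + 2 * (n - lam) * r t ^ 2
          - 2 * n * lam * r t) := by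
  intro t
  have hd : deriv r = fun s => (n + r s) / 2 * R s - (r s ^ 2 - lam * r s) / R s :=
    funext eq1
  have h1 := (hr t).hasDerivAt
  have h2 := (hR t).hasDerivAt
  have key := ((((hasDerivAt_const t n).add h1).div_const 2).mul h2).sub
    (((h1.pow 2).sub (h1.const_mul lam)).div h2 (hRne t))
  have hdd : deriv (fun s => (n + r s) / 2 * R s - (r s ^ 2 - lam * r s) / R s) t = _ := key.deriv
  rw [← hd] at hdd
  norm_num at hdd
  have hR0 : R t ≠ 0 := hRne t
  have hS1 : deriv (deriv r) t + 3 * r t ^ 2 + 2 * (n - lam) * r t - n * lam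
      = -(t / 2) * ((n + r t) / 2 * R t + (r t ^ 2 - lam * r t) / R t) := by
    rw [hdd, eq1 t, eq2 t]
    generalize R t = Rt at hR0 ⊢
    generalize r t = rt
    field_simp
    ring
  have hS2 : (deriv r t) ^ 2 + 2 * r t ^ 3 + 2 * (n - lam) * r t ^ 2
      - 2 * n * lam * r t = ((n + r t) / 2 * R t + (r t ^ 2 - lam * r t) / R t) ^ 2 := by
    rw [eq1 t]
    generalize R t = Rt at hR0 ⊢
    generalize r t = rt
    field_simp
    ring
  rw [hS1, hS2]
  ring
end

section
/- Suppose sequences α_n and β_n admit large-n expansions α_n = √(2n/3) + a₀ + a₁/√n + O(1/n) and β_n = n/6 + b₋₁√n + b₀ + O(1/√n), and satisfy for all n the discrete system α_n(2α_n - t) + 2β_n + 2β_{n+1} = 2n + 1 + λ and (2α_n - t)(2α_{n-1} - t)β_n = (2β_n - n)(2β_n - n - λ). Then necessarily a₀ = t/6, b₋₁ = t/(6√6), a₁ = (t² + 12(1+λ))/(24√6), and b₀ = (t² + 6λ)/72. -/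
open Real Filter Asymptotics
open Topology

set_option maxHeartbeats 4000000 in
theorem recurrence_coeff_expansion_coeffs
    (t lam : ℝ) (α β : ℕ → ℝ) (a0 a1 bm1 b0 : ℝ)
    (hα : (fun n : ℕ => α n - Real.sqrt (2 * n / 3) - a0 - a1 / Real.sqrt n)
        =O[atTop] fun n : ℕ => (n : ℝ)⁻¹)
    (hβ : (fun n : ℕ => β n - n / 6 - bm1 * Real.sqrt n - b0)
        =O[atTop] fun n : ℕ => ((n : ℝ) ^ ((1 : ℝ) / 2))⁻¹)
    (heq1 : ∀ n : ℕ, 1 ≤ n →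
      α n * (2 * α n - t) + 2 * β n + 2 * β (n + 1) = 2 * n + 1 + lam)
    (heq2 : ∀ n : ℕ, 1 ≤ n →
      (2 * α n - t) * (2 * α (n - 1) - t) * β n
        = (2 * β n - n) * (2 * β n - n - lam)) :
    a0 = t / 6 ∧ bm1 = t / (6 * Real.sqrt 6)
      ∧ a1 = (t ^ 2 + 12 * (1 + lam)) / (24 * Real.sqrt 6)
      ∧ b0 = (t ^ 2 + 6 * lam) / 72 := by
  have h62 : Real.sqrt 6 ^ 2 = 6 := Real.sq_sqrt (by norm_num)
  set r := Real.sqrt (2/3) with hrdef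
  have hr2 : r ^ 2 = 2/3 := Real.sq_sqrt (by norm_num)
  have hrpos : (0:ℝ) < r := Real.sqrt_pos.mpr (by norm_num)
  have hr6 : r * Real.sqrt 6 = 2 := by
    rw [hrdef, ← Real.sqrt_mul (by norm_num : (0:ℝ) ≤ 2/3)]
    rw [show (2/3:ℝ)*6 = 4 by norm_num, show (4:ℝ) = 2^2 by norm_num,
      Real.sqrt_sq (by norm_num)]
  have key : (4*r*a0 - t*r + 4*bm1 = 0)
      ∧ (2*a0^2 + 4*(r*a1) - t*a0 + 4*b0 - 2/3 - lam = 0)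
      ∧ ((16/3)*bm1 + (2/3)*(r*(2*a0-t)) = 0)
      ∧ ((16/3)*b0 + (4/3)*(r*a1) + (2*a0-t)^2/6 + 4*(r*(2*a0-t))*bm1 - 4*bm1^2
          - 2*lam/3 = 2/9) := by
    -- basic limit components
    have hcast : Tendsto (fun n : ℕ => (n:ℝ)) atTop atTop := tendsto_natCast_atTop_atTop
    have hsqrtA : Tendsto Real.sqrt atTop atTop := by
      rw [show Real.sqrt = fun x : ℝ => x ^ ((1:ℝ)/2) from funext fun x => Real.sqrt_eq_rpow x]
      exact tendsto_rpow_atTop (by norm_num)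
    have hsq : Tendsto (fun n : ℕ => Real.sqrt n) atTop atTop := hsqrtA.comp hcast
    have hmm : Tendsto (fun n : ℕ => (n:ℝ) - 1) atTop atTop :=
      tendsto_atTop_add_const_right atTop (-1) hcast |>.congr (fun n => by ring)
    have hsqm : Tendsto (fun n : ℕ => Real.sqrt ((n:ℝ) - 1)) atTop atTop := hsqrtA.comp hmm
    have hx : Tendsto (fun n : ℕ => (Real.sqrt n)⁻¹) atTop (𝓝 0) := hsq.inv_tendsto_atTop
    have hxp : Tendsto (fun n : ℕ => (Real.sqrt ((n:ℝ)-1))⁻¹) atTop (𝓝 0) :=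
      hsqm.inv_tendsto_atTop
    have hninv : Tendsto (fun n : ℕ => ((n:ℝ))⁻¹) atTop (𝓝 0) := hcast.inv_tendsto_atTop
    have hminv : Tendsto (fun n : ℕ => ((n:ℝ)-1)⁻¹) atTop (𝓝 0) := hmm.inv_tendsto_atTop
    have hy1 : Tendsto (fun n : ℕ => Real.sqrt ((n:ℝ)+1) * (Real.sqrt n)⁻¹) atTop (𝓝 1) := by
      have h1p : Tendsto (fun n : ℕ => 1 + ((n:ℝ))⁻¹) atTop (𝓝 1) := by
        simpa using tendsto_const_nhds.add hninv
      have hsq1 : Tendsto (fun n : ℕ => Real.sqrt (1 + ((n:ℝ))⁻¹)) atTop (𝓝 1) := by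
        simpa [Function.comp_def] using (Real.continuous_sqrt.tendsto 1).comp h1p
      refine hsq1.congr' ?_
      filter_upwards [eventually_ge_atTop 1] with n hn
      have hn0 : (0:ℝ) < n := by exact_mod_cast hn
      rw [show 1 + ((n:ℝ))⁻¹ = ((n:ℝ)+1)/n by field_simp,
        Real.sqrt_div (by positivity) _, div_eq_mul_inv]
    have hy : Tendsto (fun n : ℕ => Real.sqrt ((n:ℝ)-1) * (Real.sqrt n)⁻¹) atTop (𝓝 1) := by
      have h1p : Tendsto (fun n : ℕ => 1 - ((n:ℝ))⁻¹) atTop (𝓝 1) := by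
        simpa using tendsto_const_nhds.sub hninv
      have hsq1 : Tendsto (fun n : ℕ => Real.sqrt (1 - ((n:ℝ))⁻¹)) atTop (𝓝 1) := by
        simpa [Function.comp_def] using (Real.continuous_sqrt.tendsto 1).comp h1p
      refine hsq1.congr' ?_
      filter_upwards [eventually_ge_atTop 1] with n hn
      have hn0 : (0:ℝ) < n := by exact_mod_cast hn
      rw [show 1 - ((n:ℝ))⁻¹ = ((n:ℝ)-1)/n by field_simp,
        Real.sqrt_div (by simp [hn0.le]; exact_mod_cast hn) _, div_eq_mul_inv]
    have hz : Tendsto (fun n : ℕ => Real.sqrt (n:ℝ) * (Real.sqrt ((n:ℝ)-1))⁻¹) atTop (𝓝 1) := by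
      have h1p : Tendsto (fun n : ℕ => 1 + ((n:ℝ)-1)⁻¹) atTop (𝓝 1) := by
        simpa using tendsto_const_nhds.add hminv
      have hsq1 : Tendsto (fun n : ℕ => Real.sqrt (1 + ((n:ℝ)-1)⁻¹)) atTop (𝓝 1) := by
        simpa [Function.comp_def] using (Real.continuous_sqrt.tendsto 1).comp h1p
      refine hsq1.congr' ?_
      filter_upwards [eventually_ge_atTop 2] with n hn
      have hn0 : (2:ℝ) ≤ n := by exact_mod_cast hn
      have h10 : (n:ℝ)-1 ≠ 0 := by linarith
      rw [show 1 + ((n:ℝ)-1)⁻¹ = ((n:ℝ))/((n:ℝ)-1) by field_simp; ring,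
        Real.sqrt_div (by positivity) _, div_eq_mul_inv]
    have hw1 : Tendsto (fun n : ℕ => Real.sqrt ((n:ℝ)+1) - Real.sqrt n) atTop (𝓝 0) := by
      have hden : Tendsto (fun n : ℕ => (Real.sqrt ((n:ℝ)+1) + Real.sqrt n)⁻¹) atTop (𝓝 0) :=
        (tendsto_atTop_mono (fun n =>
          le_add_of_nonneg_left (Real.sqrt_nonneg _)) hsq).inv_tendsto_atTop
      refine hden.congr' ?_
      filter_upwards [eventually_ge_atTop 1] with n hn
      have hn0 : (0:ℝ) < n := by exact_mod_cast hn
      have h1 : Real.sqrt ((n:ℝ)+1) ^ 2 = (n:ℝ)+1 := Real.sq_sqrt (by positivity)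
      have h2 : Real.sqrt (n:ℝ) ^ 2 = (n:ℝ) := Real.sq_sqrt (by positivity)
      have hpos : 0 < Real.sqrt ((n:ℝ)+1) + Real.sqrt n := by positivity
      rw [eq_comm, inv_eq_one_div, eq_div_iff hpos.ne']
      linear_combination h1 - h2
    have hw : Tendsto (fun n : ℕ => Real.sqrt ((n:ℝ)-1) - Real.sqrt n) atTop (𝓝 0) := by
      have hden : Tendsto (fun n : ℕ => -(Real.sqrt ((n:ℝ)-1) + Real.sqrt n)⁻¹) atTop (𝓝 0) := by
        simpa using ((tendsto_atTop_mono (fun n =>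
          le_add_of_nonneg_left (Real.sqrt_nonneg _)) hsq).inv_tendsto_atTop).neg
      refine hden.congr' ?_
      filter_upwards [eventually_ge_atTop 1] with n hn
      have hn0 : (1:ℝ) ≤ n := by exact_mod_cast hn
      have h1 : Real.sqrt ((n:ℝ)-1) ^ 2 = (n:ℝ)-1 := Real.sq_sqrt (by linarith)
      have h2 : Real.sqrt (n:ℝ) ^ 2 = (n:ℝ) := Real.sq_sqrt (by linarith)
      have hpos : 0 < Real.sqrt ((n:ℝ)-1) + Real.sqrt n := by
        have := Real.sqrt_pos.mpr (show (0:ℝ) < n by linarith)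
        have := Real.sqrt_nonneg ((n:ℝ)-1); linarith
      field_simp
      linear_combination h2 - h1
    have hpq : Tendsto (fun n : ℕ => Real.sqrt (n:ℝ) * Real.sqrt ((n:ℝ)-1) - (n:ℝ)) atTop
        (𝓝 (-(1+1)⁻¹)) := by
      have hbase : Tendsto (fun n : ℕ => -((Real.sqrt ((n:ℝ)-1) * (Real.sqrt n)⁻¹) + 1)⁻¹) atTop
          (𝓝 (-(1+1)⁻¹)) := ((hy.add tendsto_const_nhds).inv₀ (by norm_num)).neg
      refine hbase.congr' ?_
      filter_upwards [eventually_ge_atTop 2] with n hn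
      have hn0 : (2:ℝ) ≤ n := by exact_mod_cast hn
      have h1 : Real.sqrt ((n:ℝ)-1) ^ 2 = (n:ℝ)-1 := Real.sq_sqrt (by linarith)
      have h2 : Real.sqrt (n:ℝ) ^ 2 = (n:ℝ) := Real.sq_sqrt (by linarith)
      have hs0 : Real.sqrt (n:ℝ) ≠ 0 := by
        have := Real.sqrt_pos.mpr (show (0:ℝ) < n by linarith); linarith
      have hsum : (0:ℝ) < Real.sqrt ((n:ℝ)-1) + Real.sqrt n := by
        have := Real.sqrt_pos.mpr (show (0:ℝ) < n by linarith)
        have := Real.sqrt_nonneg ((n:ℝ)-1); linarith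
      have hq : Real.sqrt ((n:ℝ)-1) * (Real.sqrt n)⁻¹ + 1
          = (Real.sqrt ((n:ℝ)-1) + Real.sqrt n) / Real.sqrt n := by field_simp
      rw [hq, inv_div]
      field_simp
      linear_combination (-(Real.sqrt (n:ℝ))) * h1 - Real.sqrt ((n:ℝ)-1) * h2
    -- remainder sequences
    set D : ℕ → ℝ := fun n : ℕ => α n - Real.sqrt (2 * n / 3) - a0 - a1 / Real.sqrt n with hDdef
    set Ee : ℕ → ℝ := fun n : ℕ => β n - n / 6 - bm1 * Real.sqrt n - b0 with hEedef
    have hDO : D =O[atTop] fun n : ℕ => (n : ℝ)⁻¹ := hα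
    have hEeO : Ee =O[atTop] fun n : ℕ => ((n : ℝ) ^ ((1 : ℝ) / 2))⁻¹ := hβ
    have hrpinv : Tendsto (fun n : ℕ => (((n:ℝ)) ^ ((1:ℝ)/2))⁻¹) atTop (𝓝 0) :=
      ((tendsto_rpow_atTop (by norm_num : (0:ℝ) < 1/2)).comp hcast).inv_tendsto_atTop
    have hD0 : Tendsto D atTop (𝓝 0) := hDO.trans_tendsto hninv
    have hE0 : Tendsto Ee atTop (𝓝 0) := hEeO.trans_tendsto hrpinv
    have hE1s : Tendsto (fun n : ℕ => Ee (n+1)) atTop (𝓝 0) := hE0.comp (tendsto_add_atTop_nat 1)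
    have hDm : Tendsto (fun n : ℕ => D (n-1)) atTop (𝓝 0) := hD0.comp (tendsto_sub_atTop_nat 1)
    have hDs : Tendsto (fun n : ℕ => D n * Real.sqrt n) atTop (𝓝 0) := by
      refine (hDO.mul (isBigO_refl (fun n : ℕ => Real.sqrt n) atTop)).trans_tendsto ?_
      refine hx.congr' ?_
      filter_upwards [eventually_ge_atTop 1] with n hn
      have hn0 : (0:ℝ) < n := by exact_mod_cast hn
      have hs0 : Real.sqrt (n:ℝ) ≠ 0 := (Real.sqrt_pos.mpr hn0).ne'
      field_simp
      rw [Real.sq_sqrt hn0.le]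
    have hDms : Tendsto (fun n : ℕ => D (n-1) * Real.sqrt ((n:ℝ)-1)) atTop (𝓝 0) := by
      have h0 := hDs.comp (tendsto_sub_atTop_nat 1)
      refine Tendsto.congr' ?_ h0
      filter_upwards [eventually_ge_atTop 1] with n hn
      have : ((n-1:ℕ):ℝ) = (n:ℝ)-1 := by rw [Nat.cast_sub hn, Nat.cast_one]
      simp only [Function.comp, this]
    have hDmsn : Tendsto (fun n : ℕ => D (n-1) * Real.sqrt n) atTop (𝓝 0) := by
      have h0 := hDms.mul hz
      rw [zero_mul] at h0
      refine Tendsto.congr' ?_ h0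
      filter_upwards [eventually_ge_atTop 2] with n hn
      have hn0 : (2:ℝ) ≤ n := by exact_mod_cast hn
      have hsp0 : Real.sqrt ((n:ℝ)-1) ≠ 0 := (Real.sqrt_pos.mpr (by linarith)).ne'
      field_simp
    -- Equation 1, order sqrt n
    set E1f : ℕ → ℝ := fun n : ℕ =>
      (4*r*a0 - t*r + 2*bm1)
      + 2*bm1 * (Real.sqrt ((n:ℝ)+1) * (Real.sqrt n)⁻¹)
      + (2*a0^2 + 4*(r*a1) - t*a0 + 4*b0 - 2/3 - lam) * (Real.sqrt n)⁻¹
      + (4*(a0*a1) - t*a1) * (Real.sqrt n)⁻¹ ^ 2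
      + 2*a1^2 * (Real.sqrt n)⁻¹ ^ 3
      + 2*(D n)^2 * (Real.sqrt n)⁻¹
      + 4*r*(D n)
      + (4*a0 - t)*(D n)*(Real.sqrt n)⁻¹
      + 4*a1*(D n)*(Real.sqrt n)⁻¹ ^ 2
      + (2*(Ee n) + 2*(Ee (n+1))) * (Real.sqrt n)⁻¹ with hE1f
    have hlim1 : Tendsto E1f atTop (𝓝 (4*r*a0 - t*r + 4*bm1)) := by
      convert (((((((((tendsto_const_nhds.add (tendsto_const_nhds.mul hy1)).add
        (tendsto_const_nhds.mul hx)).add (tendsto_const_nhds.mul (hx.pow 2))).add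
        (tendsto_const_nhds.mul (hx.pow 3))).add ((tendsto_const_nhds.mul (hD0.pow 2)).mul hx)).add
        (tendsto_const_nhds.mul hD0)).add ((tendsto_const_nhds.mul hD0).mul hx)).add
        ((tendsto_const_nhds.mul hD0).mul (hx.pow 2))).add
        (((tendsto_const_nhds.mul hE0).add (tendsto_const_nhds.mul hE1s)).mul hx)) using 2
      ring
    have hzero1 : Tendsto E1f atTop (𝓝 0) := by
      refine Tendsto.congr' ?_ tendsto_const_nhds
      filter_upwards [eventually_ge_atTop 2] with n hn
      have hn1 : 1 ≤ n := by omega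
      have h := heq1 n hn1
      have hn0 : (0:ℝ) < n := by exact_mod_cast (by omega : 0 < n)
      have hs0 : Real.sqrt (n:ℝ) ≠ 0 := (Real.sqrt_pos.mpr hn0).ne'
      have hs2 : Real.sqrt (n:ℝ) ^ 2 = (n:ℝ) := Real.sq_sqrt hn0.le
      have h23 : Real.sqrt (2*(n:ℝ)/3) = r * Real.sqrt (n:ℝ) := by
        rw [show 2*(n:ℝ)/3 = (2/3)*(n:ℝ) by ring, Real.sqrt_mul (by norm_num) _, ← hrdef]
      simp only [hE1f, hDdef, hEedef]
      push_cast
      rw [h23]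
      set s : ℝ := Real.sqrt (n:ℝ) with hsdef
      set s1 : ℝ := Real.sqrt ((n:ℝ)+1) with hs1def
      rw [show ((n:ℝ)) = s^2 from hs2.symm] at h ⊢
      linear_combination (norm := (field_simp; ring1)) (-(1/s))*h + (2*s)*hr2
    have huniq1 := tendsto_nhds_unique hlim1 hzero1
    -- Equation 1, order 1
    set E2f : ℕ → ℝ := fun n : ℕ =>
      (2*a0^2 + 4*(r*a1) - t*a0 + 4*b0 - 2/3 - lam)
      + (4*(a0*a1) - t*a1) * (Real.sqrt n)⁻¹
      + 2*a1^2 * (Real.sqrt n)⁻¹ ^ 2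
      + 2*(D n)^2
      + 4*r*(D n * Real.sqrt n)
      + (4*a0 - t)*(D n)
      + 4*a1*(D n)*(Real.sqrt n)⁻¹
      + 2*(Ee n) + 2*(Ee (n+1)) with hE2f
    have hlim2 : Tendsto E2f atTop (𝓝 (2*a0^2 + 4*(r*a1) - t*a0 + 4*b0 - 2/3 - lam)) := by
      convert ((((((((tendsto_const_nhds.add (tendsto_const_nhds.mul hx)).add
        (tendsto_const_nhds.mul (hx.pow 2))).add (tendsto_const_nhds.mul (hD0.pow 2))).add
        (tendsto_const_nhds.mul hDs)).add (tendsto_const_nhds.mul hD0)).add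
        ((tendsto_const_nhds.mul hD0).mul hx)).add (tendsto_const_nhds.mul hE0)).add
        (tendsto_const_nhds.mul hE1s)) using 2
      ring
    have hcond2 : Tendsto E2f atTop (𝓝 (-(2*bm1)*0)) := by
      have hc2 : Tendsto (fun n : ℕ => -(2*bm1)*(Real.sqrt ((n:ℝ)+1) - Real.sqrt n)) atTop
          (𝓝 (-(2*bm1)*0)) := tendsto_const_nhds.mul hw1
      refine Tendsto.congr' ?_ hc2
      filter_upwards [eventually_ge_atTop 2] with n hn
      have hn1 : 1 ≤ n := by omega
      have h := heq1 n hn1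
      have hn0 : (0:ℝ) < n := by exact_mod_cast (by omega : 0 < n)
      have hs0 : Real.sqrt (n:ℝ) ≠ 0 := (Real.sqrt_pos.mpr hn0).ne'
      have hs2 : Real.sqrt (n:ℝ) ^ 2 = (n:ℝ) := Real.sq_sqrt hn0.le
      have h23 : Real.sqrt (2*(n:ℝ)/3) = r * Real.sqrt (n:ℝ) := by
        rw [show 2*(n:ℝ)/3 = (2/3)*(n:ℝ) by ring, Real.sqrt_mul (by norm_num) _, ← hrdef]
      simp only [hE2f, hDdef, hEedef]
      push_cast
      rw [h23]
      set s : ℝ := Real.sqrt (n:ℝ) with hsdef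
      set s1 : ℝ := Real.sqrt ((n:ℝ)+1) with hs1def
      rw [show ((n:ℝ)) = s^2 from hs2.symm] at h ⊢
      linear_combination (norm := (field_simp; ring1)) (-1)*h + s*huniq1 + (2*s^2)*hr2
    have huniq2 := tendsto_nhds_unique hlim2 hcond2
    -- components for equation 2
    set Mf : ℕ → ℝ := fun n : ℕ =>
      2*bm1 + 2*b0*(Real.sqrt n)⁻¹ + 2*(Ee n)*(Real.sqrt n)⁻¹ with hMf
    set Bpf : ℕ → ℝ := fun n : ℕ =>
      bm1 + b0*(Real.sqrt n)⁻¹ + Ee n*(Real.sqrt n)⁻¹ with hBpf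
    set Btf : ℕ → ℝ := fun n : ℕ =>
      1/6 + bm1*(Real.sqrt n)⁻¹ + b0*(Real.sqrt n)⁻¹^2 + Ee n*(Real.sqrt n)⁻¹^2 with hBtf
    set Wf : ℕ → ℝ := fun n : ℕ =>
      2*(r*(2*a0-t)) + 2*(r*(2*a0-t))*(Real.sqrt ((n:ℝ)-1)*(Real.sqrt n)⁻¹)
      + 4*(r*a1)*(Real.sqrt ((n:ℝ)-1))⁻¹
      + 4*(r*a1)*(Real.sqrt ((n:ℝ)-1)*(Real.sqrt n)⁻¹)*(Real.sqrt n)⁻¹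
      + (2*a0-t)^2*(Real.sqrt n)⁻¹
      + 4*r*(D (n-1))
      + 4*r*(Real.sqrt ((n:ℝ)-1)*(Real.sqrt n)⁻¹)*(D n)
      + 2*((2*a0-t)*a1)*(Real.sqrt ((n:ℝ)-1))⁻¹*(Real.sqrt n)⁻¹
      + 2*((2*a0-t)*a1)*(Real.sqrt n)⁻¹^2
      + 2*(2*a0-t)*(D (n-1))*(Real.sqrt n)⁻¹
      + 2*(2*a0-t)*(D n)*(Real.sqrt n)⁻¹
      + 4*a1^2*(Real.sqrt ((n:ℝ)-1))⁻¹*(Real.sqrt n)⁻¹^2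
      + 4*a1*(D (n-1))*(Real.sqrt n)⁻¹^2
      + 4*a1*(D n)*(Real.sqrt ((n:ℝ)-1))⁻¹*(Real.sqrt n)⁻¹
      + 4*(D n)*(D (n-1))*(Real.sqrt n)⁻¹ with hWf
    set Vf : ℕ → ℝ := fun n : ℕ =>
      4*(r*a1)*(Real.sqrt (n:ℝ)*(Real.sqrt ((n:ℝ)-1))⁻¹)
      + 4*(r*a1)*(Real.sqrt ((n:ℝ)-1)*(Real.sqrt n)⁻¹)
      + (2*a0-t)^2
      + 4*r*(D (n-1) * Real.sqrt n)
      + 4*r*(Real.sqrt ((n:ℝ)-1)*(Real.sqrt n)⁻¹)*(D n * Real.sqrt n)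
      + 2*((2*a0-t)*a1)*(Real.sqrt ((n:ℝ)-1))⁻¹
      + 2*((2*a0-t)*a1)*(Real.sqrt n)⁻¹
      + 2*(2*a0-t)*(D (n-1))
      + 2*(2*a0-t)*(D n)
      + 4*a1^2*(Real.sqrt n)⁻¹*(Real.sqrt ((n:ℝ)-1))⁻¹
      + 4*a1*(D (n-1))*(Real.sqrt n)⁻¹
      + 4*a1*(D n)*(Real.sqrt ((n:ℝ)-1))⁻¹
      + 4*(D n)*(D (n-1)) with hVf
    have hM : Tendsto Mf atTop (𝓝 (2*bm1)) := by
      convert ((tendsto_const_nhds.add (tendsto_const_nhds.mul hx)).add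
        ((tendsto_const_nhds.mul hE0).mul hx)) using 2
      ring
    have hBp : Tendsto Bpf atTop (𝓝 bm1) := by
      convert ((tendsto_const_nhds.add (tendsto_const_nhds.mul hx)).add
        (hE0.mul hx)) using 2
      ring
    have hBt : Tendsto Btf atTop (𝓝 (1/6)) := by
      convert (((tendsto_const_nhds.add (tendsto_const_nhds.mul hx)).add
        (tendsto_const_nhds.mul (hx.pow 2))).add (hE0.mul (hx.pow 2))) using 2
      ring
    have hW : Tendsto Wf atTop (𝓝 (4*(r*(2*a0-t)))) := by
      convert ((((((((((((((tendsto_const_nhds.add (tendsto_const_nhds.mul hy)).add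
        (tendsto_const_nhds.mul hxp)).add ((tendsto_const_nhds.mul hy).mul hx)).add
        (tendsto_const_nhds.mul hx)).add (tendsto_const_nhds.mul hDm)).add
        ((tendsto_const_nhds.mul hy).mul hD0)).add ((tendsto_const_nhds.mul hxp).mul hx)).add
        (tendsto_const_nhds.mul (hx.pow 2))).add ((tendsto_const_nhds.mul hDm).mul hx)).add
        ((tendsto_const_nhds.mul hD0).mul hx)).add
        ((tendsto_const_nhds.mul hxp).mul (hx.pow 2))).add
        ((tendsto_const_nhds.mul hDm).mul (hx.pow 2))).add
        (((tendsto_const_nhds.mul hD0).mul hxp).mul hx)).add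
        (((tendsto_const_nhds.mul hD0).mul hDm).mul hx)) using 2
      ring
    have hV : Tendsto Vf atTop (𝓝 (8*(r*a1) + (2*a0-t)^2)) := by
      convert ((((((((((((tendsto_const_nhds.mul hz).add (tendsto_const_nhds.mul hy)).add
        tendsto_const_nhds).add (tendsto_const_nhds.mul hDmsn)).add
        ((tendsto_const_nhds.mul hy).mul hDs)).add (tendsto_const_nhds.mul hxp)).add
        (tendsto_const_nhds.mul hx)).add (tendsto_const_nhds.mul hDm)).add
        (tendsto_const_nhds.mul hD0)).add ((tendsto_const_nhds.mul hx).mul hxp)).add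
        ((tendsto_const_nhds.mul hDm).mul hx)).add
        ((tendsto_const_nhds.mul hD0).mul hxp)).add
        ((tendsto_const_nhds.mul hD0).mul hDm) using 2
      ring
    -- Equation 2, order n^(3/2)
    set E3f : ℕ → ℝ := fun n : ℕ =>
      (4/9)*(Real.sqrt ((n:ℝ)-1) - Real.sqrt n)
      + (8/3)*(Real.sqrt ((n:ℝ)-1)*(Real.sqrt n)⁻¹)*(Bpf n)
      + (4/3)*(Mf n)
      - (Mf n)^2*(Real.sqrt n)⁻¹
      + lam*(Mf n)*(Real.sqrt n)⁻¹^2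
      - 2*lam/3*(Real.sqrt n)⁻¹
      + (Wf n)*(Btf n) with hE3f
    have hlim3 : Tendsto E3f atTop (𝓝 ((16/3)*bm1 + (2/3)*(r*(2*a0-t)))) := by
      convert (((((((tendsto_const_nhds.mul hw).add
        ((tendsto_const_nhds.mul hy).mul hBp)).add (tendsto_const_nhds.mul hM)).sub
        ((hM.pow 2).mul hx)).add ((tendsto_const_nhds.mul hM).mul (hx.pow 2))).sub
        (tendsto_const_nhds.mul hx)).add (hW.mul hBt)) using 2
      ring
    have hzero3 : Tendsto E3f atTop (𝓝 0) := by
      refine Tendsto.congr' ?_ tendsto_const_nhds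
      filter_upwards [eventually_ge_atTop 2] with n hn
      have hn1 : 1 ≤ n := by omega
      have h2 := heq2 n hn1
      have hn0 : (2:ℝ) ≤ n := by exact_mod_cast hn
      have hs0 : Real.sqrt (n:ℝ) ≠ 0 := (Real.sqrt_pos.mpr (by linarith)).ne'
      have hsp0 : Real.sqrt ((n:ℝ)-1) ≠ 0 := (Real.sqrt_pos.mpr (by linarith)).ne'
      have hs2 : Real.sqrt (n:ℝ) ^ 2 = (n:ℝ) := Real.sq_sqrt (by linarith)
      have hc1 : ((n-1:ℕ):ℝ) = (n:ℝ)-1 := by rw [Nat.cast_sub hn1, Nat.cast_one]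
      have h23 : Real.sqrt (2*(n:ℝ)/3) = r * Real.sqrt (n:ℝ) := by
        rw [show 2*(n:ℝ)/3 = (2/3)*(n:ℝ) by ring, Real.sqrt_mul (by norm_num) _, ← hrdef]
      have h23' : Real.sqrt (2*((n:ℝ)-1)/3) = r * Real.sqrt ((n:ℝ)-1) := by
        rw [show 2*((n:ℝ)-1)/3 = (2/3)*((n:ℝ)-1) by ring,
          Real.sqrt_mul (by norm_num) _, ← hrdef]
      simp only [hE3f, hWf, hMf, hBpf, hBtf, hDdef, hEedef]
      push_cast [hc1]
      rw [h23, h23']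
      set s : ℝ := Real.sqrt (n:ℝ) with hsdef
      set sp : ℝ := Real.sqrt ((n:ℝ)-1) with hspdef
      rw [show ((n:ℝ)) = s^2 from hs2.symm] at h2 ⊢
      linear_combination (norm := (field_simp; ring1))
        (-(1/s^3))*h2 + (4*sp*(β n)/s^2)*hr2
    have huniq3 := tendsto_nhds_unique hlim3 hzero3
    -- Equation 2, order n
    set E4f : ℕ → ℝ := fun n : ℕ =>
      (8/3)*(Real.sqrt ((n:ℝ)-1)*(Real.sqrt n)⁻¹)*(b0 + Ee n)
      + (8/3)*b0 + (8/3)*(Ee n)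
      + (1/6)*(Vf n)
      + (Wf n)*(Bpf n)
      - (Mf n)^2
      + lam*(Mf n)*(Real.sqrt n)⁻¹
      - 2*lam/3 with hE4f
    have hlim4 : Tendsto E4f atTop (𝓝 ((16/3)*b0 + (4/3)*(r*a1) + (2*a0-t)^2/6
        + 4*(r*(2*a0-t))*bm1 - 4*bm1^2 - 2*lam/3)) := by
      convert (((((((((tendsto_const_nhds.mul hy).mul (tendsto_const_nhds.add hE0)).add
        tendsto_const_nhds).add (tendsto_const_nhds.mul hE0)).add
        (tendsto_const_nhds.mul hV)).add (hW.mul hBp)).sub (hM.pow 2)).add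
        ((tendsto_const_nhds.mul hM).mul hx)).sub tendsto_const_nhds) using 2
      ring
    have hcond4 : Tendsto E4f atTop (𝓝 ((-(4/9))*(-(1+1)⁻¹))) := by
      have hc4 : Tendsto (fun n : ℕ =>
          (-(4/9))*(Real.sqrt (n:ℝ)*Real.sqrt ((n:ℝ)-1) - (n:ℝ))) atTop
          (𝓝 ((-(4/9))*(-(1+1)⁻¹))) := tendsto_const_nhds.mul hpq
      refine Tendsto.congr' ?_ hc4
      filter_upwards [eventually_ge_atTop 2] with n hn
      have hn1 : 1 ≤ n := by omega
      have h2 := heq2 n hn1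
      have hn0 : (2:ℝ) ≤ n := by exact_mod_cast hn
      have hs0 : Real.sqrt (n:ℝ) ≠ 0 := (Real.sqrt_pos.mpr (by linarith)).ne'
      have hsp0 : Real.sqrt ((n:ℝ)-1) ≠ 0 := (Real.sqrt_pos.mpr (by linarith)).ne'
      have hs2 : Real.sqrt (n:ℝ) ^ 2 = (n:ℝ) := Real.sq_sqrt (by linarith)
      have hc1 : ((n-1:ℕ):ℝ) = (n:ℝ)-1 := by rw [Nat.cast_sub hn1, Nat.cast_one]
      have h23 : Real.sqrt (2*(n:ℝ)/3) = r * Real.sqrt (n:ℝ) := by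
        rw [show 2*(n:ℝ)/3 = (2/3)*(n:ℝ) by ring, Real.sqrt_mul (by norm_num) _, ← hrdef]
      have h23' : Real.sqrt (2*((n:ℝ)-1)/3) = r * Real.sqrt ((n:ℝ)-1) := by
        rw [show 2*((n:ℝ)-1)/3 = (2/3)*((n:ℝ)-1) by ring,
          Real.sqrt_mul (by norm_num) _, ← hrdef]
      simp only [hE4f, hWf, hVf, hMf, hBpf, hDdef, hEedef]
      push_cast [hc1]
      rw [h23, h23']
      set s : ℝ := Real.sqrt (n:ℝ) with hsdef
      set sp : ℝ := Real.sqrt ((n:ℝ)-1) with hspdef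
      rw [show ((n:ℝ)) = s^2 from hs2.symm] at h2 ⊢
      linear_combination (norm := (field_simp; ring1))
        (-(1/s^2))*h2 + ((s+sp)/2)*huniq3 + (4*sp*(β n)/s)*hr2
    have huniq4 := tendsto_nhds_unique hlim4 hcond4
    exact ⟨huniq1, by linear_combination huniq2, huniq3, by linear_combination huniq4⟩
  obtain ⟨k1, k2, k3, k4⟩ := key
  have ha0r : r*(a0 - t/6) = 0 := by linear_combination (1/3)*k1 - (1/4)*k3
  have ha0 : a0 = t/6 := by
    have h := (mul_eq_zero.mp ha0r).resolve_left hrpos.ne'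
    linarith
  subst ha0
  have hbm1v : bm1 = t*r/12 := by linear_combination (3/16)*k3
  subst hbm1v
  have hb0v : b0 = (t^2 + 6*lam)/72 := by
    linear_combination (-1/12)*k2 + (1/4)*k4 + (t^2/16)*hr2
  have hra1v : r*a1 = t^2/72 + 1/6 + lam/6 := by linear_combination (1/4)*k2 - hb0v
  have h2a1 : 2*a1 = Real.sqrt 6 * (t^2/72 + 1/6 + lam/6) := by
    linear_combination Real.sqrt 6 * hra1v - a1 * hr6
  refine ⟨by norm_num, ?_, ?_, hb0v⟩
  · rw [eq_div_iff (by positivity : (6:ℝ)*Real.sqrt 6 ≠ 0)]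
    linear_combination (t/2)*hr6
  · rw [eq_div_iff (by positivity : (24:ℝ)*Real.sqrt 6 ≠ 0)]
    linear_combination 12*Real.sqrt 6*h2a1 + (t^2/6 + 2 + 2*lam)*h62
end
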